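/- The function g(b) = log₂((1 + (a·c(b) + p)/(e·c(b) + q)) / (1 + (a + p)/(e + q)))⁻¹ considered as the rate degradation ζ(b) = log₂(1 + (a + p)/(e + q)) − log₂(1 + (a·c(b) + p)/(e·c(b) + q)) with c(b) = cos²(π/2^b), is nonnegative and monotonically non-increasing in b ≥ 1, and tends to 0 as b → ∞, whenever a, p, e, q > 0 and (a·y + p)/(e·y + q) is increasing in y (i.e., a·q − p·e > 0). -/

import Mathlib

open Real Filter

private lemma aux_mono (a p e q : ℝ) (hp : 0 < p) (he : 0 < e) (hq : 0 < q)
    (hmono : a * q - p * e > 0) {y₁ y₂ : ℝ} (h1 : 0 ≤ y₁) (h12 : y₁ ≤ y₂) :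
    Real.logb 2 (1 + (a * y₁ + p) / (e * y₁ + q))
      ≤ Real.logb 2 (1 + (a * y₂ + p) / (e * y₂ + q)) := by
  have ha : 0 < a := by nlinarith
  have hd1 : 0 < e * y₁ + q := by nlinarith
  have hd2 : 0 < e * y₂ + q := by nlinarith
  have hn1 : 0 < a * y₁ + p := by nlinarith
  have hratio : (a * y₁ + p) / (e * y₁ + q) ≤ (a * y₂ + p) / (e * y₂ + q) := by
    rw [div_le_div_iff₀ hd1 hd2]; nlinarith
  exact Real.logb_le_logb_of_le one_lt_two (by positivity) (by linarith)

private lemma aux_cos (b : ℕ) (hb : 1 ≤ b) :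
    0 ≤ (Real.cos (Real.pi / 2 ^ b))^2 ∧ (Real.cos (Real.pi / 2 ^ b))^2 ≤ 1 := by
  constructor
  · positivity
  · nlinarith [Real.neg_one_le_cos (Real.pi / 2 ^ b), Real.cos_le_one (Real.pi / 2 ^ b)]

/-- the rate degradation ζ(b) due to b-bit quantization is nonnegative,
non-increasing in b ≥ 1, and tends to 0 as b → ∞. -/
theorem stmt_11 (a p e q : ℝ) (ha : 0 < a) (hp : 0 < p) (he : 0 < e) (hq : 0 < q)
    (hmono : a * q - p * e > 0) :
    (∀ b : ℕ, 1 ≤ b →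
      0 ≤ Real.logb 2 (1 + (a + p) / (e + q))
        - Real.logb 2 (1 + (a * (Real.cos (Real.pi / 2 ^ b))^2 + p)
            / (e * (Real.cos (Real.pi / 2 ^ b))^2 + q))) ∧
    (∀ b₁ b₂ : ℕ, 1 ≤ b₁ → b₁ ≤ b₂ →
      Real.logb 2 (1 + (a + p) / (e + q))
        - Real.logb 2 (1 + (a * (Real.cos (Real.pi / 2 ^ b₂))^2 + p)
            / (e * (Real.cos (Real.pi / 2 ^ b₂))^2 + q))
      ≤ Real.logb 2 (1 + (a + p) / (e + q))
        - Real.logb 2 (1 + (a * (Real.cos (Real.pi / 2 ^ b₁))^2 + p)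
            / (e * (Real.cos (Real.pi / 2 ^ b₁))^2 + q))) ∧
    Filter.Tendsto (fun b : ℕ =>
      Real.logb 2 (1 + (a + p) / (e + q))
        - Real.logb 2 (1 + (a * (Real.cos (Real.pi / 2 ^ b))^2 + p)
            / (e * (Real.cos (Real.pi / 2 ^ b))^2 + q)))
      Filter.atTop (nhds 0) := by
  have key : ∀ {y₁ y₂ : ℝ}, 0 ≤ y₁ → y₁ ≤ y₂ →
      Real.logb 2 (1 + (a * y₁ + p) / (e * y₁ + q))
        ≤ Real.logb 2 (1 + (a * y₂ + p) / (e * y₂ + q)) :=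
    fun h1 h12 => aux_mono a p e q hp he hq hmono h1 h12
  refine ⟨?_, ?_, ?_⟩
  · intro b hb
    obtain ⟨h0, h1⟩ := aux_cos b hb
    have := key h0 h1
    have heq : (1 : ℝ) + (a * 1 + p) / (e * 1 + q) = 1 + (a + p) / (e + q) := by ring_nf
    rw [heq] at this
    linarith
  · intro b₁ b₂ hb₁ h12
    obtain ⟨h0, _⟩ := aux_cos b₁ hb₁
    have hcos : Real.cos (Real.pi / 2 ^ b₁) ≤ Real.cos (Real.pi / 2 ^ b₂) := by
      apply Real.cos_le_cos_of_nonneg_of_le_pi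
      · positivity
      · have : (2:ℝ) ^ b₁ ≥ 2 ^ 1 := by
          apply pow_le_pow_right₀ one_le_two hb₁
        have h2 : Real.pi / 2 ^ b₁ ≤ Real.pi / 2 := by
          apply div_le_div_of_nonneg_left Real.pi_pos.le (by norm_num) (by norm_num at this ⊢; linarith)
        linarith [Real.pi_pos]
      · apply div_le_div_of_nonneg_left Real.pi_pos.le (by positivity)
        apply pow_le_pow_right₀ one_le_two h12
    have hcos1 : 0 ≤ Real.cos (Real.pi / 2 ^ b₁) := by
      apply Real.cos_nonneg_of_mem_Icc
      constructor
      · have : (0:ℝ) ≤ Real.pi / 2 ^ b₁ := by positivity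
        linarith [Real.pi_pos]
      · have : (2:ℝ) ^ b₁ ≥ 2 ^ 1 := pow_le_pow_right₀ one_le_two hb₁
        rw [div_le_iff₀ (by positivity)]
        nlinarith [Real.pi_pos]
    have hsq : (Real.cos (Real.pi / 2 ^ b₁))^2 ≤ (Real.cos (Real.pi / 2 ^ b₂))^2 := by
      nlinarith
    have := key h0 hsq
    linarith
  · have hc : Filter.Tendsto (fun b : ℕ => (Real.cos (Real.pi / 2 ^ b))^2)
        Filter.atTop (nhds 1) := by
      have h1 : Filter.Tendsto (fun b : ℕ => Real.pi / 2 ^ b) Filter.atTop (nhds 0) := by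
        have := tendsto_pow_atTop_atTop_of_one_lt (α := ℝ) one_lt_two
        simpa [div_eq_mul_inv] using this.inv_tendsto_atTop.const_mul Real.pi
      have h2 : Filter.Tendsto (fun b : ℕ => Real.cos (Real.pi / 2 ^ b))
          Filter.atTop (nhds 1) := by
        have := (Real.continuous_cos.tendsto 0).comp h1
        rwa [Real.cos_zero] at this
      simpa using h2.pow 2
    have hfun : ContinuousAt (fun y : ℝ => Real.logb 2 (1 + (a * y + p) / (e * y + q))) 1 := by
      have hd : e * (1:ℝ) + q ≠ 0 := by nlinarith
      have hinner : ContinuousAt (fun y : ℝ => 1 + (a * y + p) / (e * y + q)) 1 := by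
        apply ContinuousAt.add continuousAt_const
        exact ContinuousAt.div (by fun_prop) (by fun_prop) hd
      have hlog : ContinuousAt (Real.logb 2) (1 + (a * 1 + p) / (e * 1 + q)) := by
        apply Real.continuousAt_logb
        have : (0:ℝ) < 1 + (a * 1 + p) / (e * 1 + q) := by positivity
        linarith
      exact ContinuousAt.comp (g := Real.logb 2)
        (f := fun y : ℝ => 1 + (a * y + p) / (e * y + q)) hlog hinner
    have h3 := (hfun.tendsto.comp hc)
    have heq : Real.logb 2 (1 + (a * (1:ℝ) + p) / (e * (1:ℝ) + q))
        = Real.logb 2 (1 + (a + p) / (e + q)) := by norm_num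
    rw [heq] at h3
    have h4 := (tendsto_const_nhds (x := Real.logb 2 (1 + (a + p) / (e + q)))
      (f := Filter.atTop (α := ℕ))).sub h3
    simpa [Function.comp, sub_self] using h4
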